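/- Let n ≥ 1 and g : Fin n → ℝ. For m₁, m₂ with 0 < m₁ < m₂ < 1, if x₁ is a global minimizer of the expectile loss L_{m₁} and x₂ is a global minimizer of L_{m₂}, where L_m(x) = ∑_{i} w_i(x)·(g_i − x)² with w_i(x) = 1−m if g_i − x < 0 and w_i(x) = m otherwise, then x₁ ≤ x₂. -/
import Mathlib


open Finset

private lemma expectile_split (n : ℕ) (g : Fin n → ℝ) (m x : ℝ) :
    (∑ i, (if g i - x < 0 then 1 - m else m) * (g i - x) ^ 2) =
      m * (∑ i, (max (g i - x) 0) ^ 2) + (1 - m) * (∑ i, (max (x - g i) 0) ^ 2) := by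
  rw [Finset.mul_sum, Finset.mul_sum, ← Finset.sum_add_distrib]
  refine Finset.sum_congr rfl fun i _ => ?_
  by_cases h : g i - x < 0
  · rw [if_pos h, max_eq_right h.le, max_eq_left (by linarith : (0:ℝ) ≤ x - g i)]
    ring
  · rw [if_neg h, max_eq_left (by linarith : (0:ℝ) ≤ g i - x),
      max_eq_right (by linarith : x - g i ≤ 0)]
    ring

/-- Monotonicity of expectiles in the parameter m. -/
theorem expectile_monotone (n : ℕ) (hn : 1 ≤ n) (g : Fin n → ℝ) (m₁ m₂ : ℝ)
    (hm₁ : 0 < m₁) (hm₁₂ : m₁ < m₂) (hm₂ : m₂ < 1) (x₁ x₂ : ℝ)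
    (h₁ : ∀ x : ℝ,
      (∑ i, (if g i - x₁ < 0 then 1 - m₁ else m₁) * (g i - x₁) ^ 2) ≤
        ∑ i, (if g i - x < 0 then 1 - m₁ else m₁) * (g i - x) ^ 2)
    (h₂ : ∀ x : ℝ,
      (∑ i, (if g i - x₂ < 0 then 1 - m₂ else m₂) * (g i - x₂) ^ 2) ≤
        ∑ i, (if g i - x < 0 then 1 - m₂ else m₂) * (g i - x) ^ 2) :
    x₁ ≤ x₂ := by
  by_contra hlt
  push_neg at hlt
  -- hlt : x₂ < x₁
  set A : ℝ → ℝ := fun x => ∑ i, (max (g i - x) 0) ^ 2 with hA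
  set B : ℝ → ℝ := fun x => ∑ i, (max (x - g i) 0) ^ 2 with hB
  have e1 := h₁ x₂
  have e2 := h₂ x₁
  rw [expectile_split, expectile_split] at e1 e2
  -- e1 : m₁ * A x₁ + (1-m₁) * B x₁ ≤ m₁ * A x₂ + (1-m₁) * B x₂
  -- e2 : m₂ * A x₂ + (1-m₂) * B x₂ ≤ m₂ * A x₁ + (1-m₂) * B x₁
  -- Adding: (m₂ - m₁) * ((A x₂ - A x₁) - (B x₂ - B x₁)) ≤ 0
  have key : A x₂ - A x₁ ≤ B x₂ - B x₁ := by nlinarith [sub_pos.mpr hm₁₂]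
  -- A is antitone, B is monotone (termwise)
  have hAle : A x₁ ≤ A x₂ := by
    refine Finset.sum_le_sum fun i _ => ?_
    have h1 : max (g i - x₁) 0 ≤ max (g i - x₂) 0 :=
      max_le_max (by linarith) le_rfl
    exact pow_le_pow_left₀ (le_max_right _ _) h1 2
  have hBle : B x₂ ≤ B x₁ := by
    refine Finset.sum_le_sum fun i _ => ?_
    have h1 : max (x₂ - g i) 0 ≤ max (x₁ - g i) 0 :=
      max_le_max (by linarith) le_rfl
    exact pow_le_pow_left₀ (le_max_right _ _) h1 2
  have hAeq : A x₁ = A x₂ := le_antisymm hAle (by linarith)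
  have hBeq : B x₂ = B x₁ := le_antisymm hBle (by linarith)
  -- now derive a contradiction using the element i = 0
  have i0 : Fin n := ⟨0, hn⟩
  by_cases hg : x₂ < g i0
  · -- then A x₁ < A x₂ strictly
    have : A x₁ < A x₂ := by
      refine Finset.sum_lt_sum (fun i _ => ?_) ⟨i0, Finset.mem_univ _, ?_⟩
      · have h1 : max (g i - x₁) 0 ≤ max (g i - x₂) 0 :=
          max_le_max (by linarith) le_rfl
        exact pow_le_pow_left₀ (le_max_right _ _) h1 2
      · have h2 : max (g i0 - x₂) 0 = g i0 - x₂ := max_eq_left (by linarith)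
        have h3 : max (g i0 - x₁) 0 < g i0 - x₂ := by
          rcases le_or_gt (g i0 - x₁) 0 with h | h
          · rw [max_eq_right h]; linarith
          · rw [max_eq_left h.le]; linarith
        rw [h2]
        exact pow_lt_pow_left₀ h3 (le_max_right _ _) (by norm_num)
    linarith
  · -- g i0 ≤ x₂ < x₁, then B x₂ < B x₁ strictly
    push_neg at hg
    have : B x₂ < B x₁ := by
      refine Finset.sum_lt_sum (fun i _ => ?_) ⟨i0, Finset.mem_univ _, ?_⟩
      · have h1 : max (x₂ - g i) 0 ≤ max (x₁ - g i) 0 :=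
          max_le_max (by linarith) le_rfl
        exact pow_le_pow_left₀ (le_max_right _ _) h1 2
      · have h2 : max (x₁ - g i0) 0 = x₁ - g i0 := max_eq_left (by linarith)
        have h3 : max (x₂ - g i0) 0 < x₁ - g i0 := by
          rw [max_eq_left (by linarith : (0:ℝ) ≤ x₂ - g i0)]; linarith
        rw [h2]
        exact pow_lt_pow_left₀ h3 (le_max_right _ _) (by norm_num)
    linarith
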